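/- arXiv:1708.01351 — 2 statements merged into one kernel-verified Lean document; each statement's English description precedes it below -/
import Mathlib

section
/- Let q be a positive real number and g ≥ 1. Let f(T) = ∏_{j=1}^{g} (T - √q e^{iθ_j})(T - √q e^{-iθ_j}) be a polynomial with complex roots of absolute value √q paired by conjugation. Then disc(f) = (-1)^g · 2^{2g²} · q^{2g²-g} · (∏_{j=1}^g sin²θ_j) · (∏_{1≤k<t≤g} (cos θ_k - cos θ_t)²)². -/
private lemma aux_double {m : ℕ} (f : Fin m → Fin m → ℂ) :
    (∏ i : Fin m, ∏ j ∈ Finset.univ.filter (fun j => i < j), f i j)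
      = ∏ p ∈ Finset.univ.filter (fun p : Fin m × Fin m => p.1 < p.2), f p.1 p.2 := by
  rw [Finset.prod_filter, Fintype.prod_prod_type]
  exact Finset.prod_congr rfl fun i _ => (Finset.prod_filter _ _)

private lemma aux_swap {m : ℕ} (f : Fin m × Fin m → ℂ) :
    ∏ p ∈ Finset.univ.filter (fun p : Fin m × Fin m => p.2 < p.1), f p
      = ∏ p ∈ Finset.univ.filter (fun p : Fin m × Fin m => p.1 < p.2), f p.swap := by
  refine Finset.prod_nbij' Prod.swap Prod.swap ?_ ?_ ?_ ?_ ?_ <;>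
    simp [Prod.swap, Finset.mem_filter]

private lemma aux_ne {m : ℕ} (f : Fin m × Fin m → ℂ) :
    ∏ p ∈ Finset.univ.filter (fun p : Fin m × Fin m => p.1 ≠ p.2), f p
      = (∏ p ∈ Finset.univ.filter (fun p : Fin m × Fin m => p.1 < p.2), f p)
        * ∏ p ∈ Finset.univ.filter (fun p : Fin m × Fin m => p.1 < p.2), f p.swap := by
  rw [← aux_swap,
    ← Finset.prod_filter_mul_prod_filter_not
      (Finset.univ.filter (fun p : Fin m × Fin m => p.1 ≠ p.2))
      (fun p => p.1 < p.2), Finset.filter_filter, Finset.filter_filter]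
  congr 1
  · refine Finset.prod_congr ?_ fun _ _ => rfl
    ext p
    simp only [Finset.mem_filter, Finset.mem_univ, true_and]
    exact ⟨fun h => h.2, fun h => ⟨ne_of_lt h, h⟩⟩
  · refine Finset.prod_congr ?_ fun _ _ => rfl
    ext p
    simp only [Finset.mem_filter, Finset.mem_univ, true_and]
    exact ⟨fun h => lt_of_le_of_ne (not_lt.mp h.2) (Ne.symm h.1),
      fun h => ⟨Ne.symm (ne_of_lt h), not_lt.mpr h.le⟩⟩

private lemma aux_key (u v w z : ℂ) (huv : u * v = 1) (hwz : w * z = 1) :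
    (u - w) ^ 2 * (v - z) ^ 2 * ((u - z) ^ 2 * (w - v) ^ 2)
      = ((u + v) - (w + z)) ^ 4 := by
  have hu : u ≠ 0 := left_ne_zero_of_mul_eq_one huv
  have hw : w ≠ 0 := left_ne_zero_of_mul_eq_one hwz
  have hv : v = u⁻¹ := eq_inv_of_mul_eq_one_left (by linear_combination huv)
  have hz : z = w⁻¹ := eq_inv_of_mul_eq_one_left (by linear_combination hwz)
  subst hv hz
  field_simp
  ring



/-- discriminant formula for a degree `2g` Weil-type polynomial whose
roots are `√q e^{± i θ_j}`.  The discriminant is the product of `(r_i - r_j)^2`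
over pairs `i < j` of roots. -/
theorem stmt0 (g : ℕ) (hg : 1 ≤ g) (q : ℝ) (hq : 0 < q) (θ : Fin g → ℝ)
    (r : Fin (2 * g) → ℂ)
    (hr : ∀ k : Fin (2 * g), r k = if h : (k : ℕ) < g
      then (Real.sqrt q : ℂ) * Complex.exp ((θ ⟨k, h⟩ : ℂ) * Complex.I)
      else (Real.sqrt q : ℂ) *
        Complex.exp (-(θ ⟨(k : ℕ) - g, by have := k.2; omega⟩ : ℂ) * Complex.I)) :
    (∏ i : Fin (2 * g), ∏ j ∈ Finset.univ.filter (fun j => i < j), (r i - r j) ^ 2)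
      = (-1) ^ g * 2 ^ (2 * g ^ 2) * (q : ℂ) ^ (2 * g ^ 2 - g) *
        (∏ j : Fin g, (Real.sin (θ j) : ℂ) ^ 2) *
        (∏ p ∈ Finset.univ.filter (fun p : Fin g × Fin g => p.1 < p.2),
          ((Real.cos (θ p.1) : ℂ) - (Real.cos (θ p.2) : ℂ)) ^ 2) ^ 2 := by

  have hg0 : 0 < g := hg
  set s : ℂ := (Real.sqrt q : ℂ) with hs
  have hs2 : s ^ 2 = (q : ℂ) := by
    rw [hs, ← Complex.ofReal_pow, Real.sq_sqrt hq.le]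
  set a : Fin g → ℂ := fun k => s * Complex.exp ((θ k : ℂ) * Complex.I) with ha
  set b : Fin g → ℂ := fun k => s * Complex.exp (-(θ k : ℂ) * Complex.I) with hb
  have hra : ∀ (i : Fin (2 * g)) (h : (i : ℕ) < g), r i = a ⟨i, h⟩ := by
    intro i h
    rw [hr, dif_pos h, ha]
  have hrb : ∀ (i : Fin (2 * g)) (h : ¬ (i : ℕ) < g),
      r i = b ⟨(i : ℕ) - g, by have := i.2; omega⟩ := by
    intro i h
    rw [hr, dif_neg h, hb]
  have ha' : ∀ (i : Fin (2 * g)) (k : Fin g), (i : ℕ) = (k : ℕ) → r i = a k := by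
    intro i k h
    have h1 : (i : ℕ) < g := h ▸ k.2
    rw [hra i h1]
    exact congrArg a (Fin.ext h)
  have hb' : ∀ (i : Fin (2 * g)) (k : Fin g), (i : ℕ) = g + (k : ℕ) → r i = b k := by
    intro i k h
    have h1 : ¬ (i : ℕ) < g := by omega
    rw [hrb i h1]
    exact congrArg b (Fin.ext (by simp [h]))
  -- Step A: split the product over pairs of Fin (2g) into three classes
  have hstepA :
      (∏ i : Fin (2 * g), ∏ j ∈ Finset.univ.filter (fun j => i < j), (r i - r j) ^ 2)
        = ((∏ p ∈ Finset.univ.filter (fun p : Fin g × Fin g => p.1 < p.2), (a p.1 - a p.2) ^ 2)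
            * ∏ p ∈ Finset.univ.filter (fun p : Fin g × Fin g => p.1 < p.2), (b p.1 - b p.2) ^ 2)
          * ∏ p : Fin g × Fin g, (a p.1 - b p.2) ^ 2 := by
    rw [aux_double]
    rw [← Finset.prod_filter_mul_prod_filter_not
      (Finset.univ.filter (fun p : Fin (2 * g) × Fin (2 * g) => p.1 < p.2))
      (fun p => (p.2 : ℕ) < g)]
    rw [← Finset.prod_filter_mul_prod_filter_not
      ((Finset.univ.filter (fun p : Fin (2 * g) × Fin (2 * g) => p.1 < p.2)).filter
        (fun p => ¬ (p.2 : ℕ) < g))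
      (fun p => (p.1 : ℕ) < g)]
    have h1 : ∏ p ∈ (Finset.univ.filter (fun p : Fin (2 * g) × Fin (2 * g) => p.1 < p.2)).filter
          (fun p => (p.2 : ℕ) < g), (r p.1 - r p.2) ^ 2
        = ∏ p ∈ Finset.univ.filter (fun p : Fin g × Fin g => p.1 < p.2), (a p.1 - a p.2) ^ 2 := by
      refine Finset.prod_nbij'
        (fun p : Fin (2 * g) × Fin (2 * g) =>
          ((⟨min (p.1 : ℕ) (g - 1), by omega⟩ : Fin g), (⟨min (p.2 : ℕ) (g - 1), by omega⟩ : Fin g)))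
        (fun p : Fin g × Fin g =>
          ((⟨(p.1 : ℕ), by omega⟩ : Fin (2 * g)), (⟨(p.2 : ℕ), by omega⟩ : Fin (2 * g))))
        ?_ ?_ ?_ ?_ ?_
      · rintro ⟨p1, p2⟩ hp
        simp only [Finset.mem_filter, Finset.mem_univ, true_and, Fin.lt_def] at hp ⊢
        omega
      · rintro ⟨p1, p2⟩ hp
        simp only [Finset.mem_filter, Finset.mem_univ, true_and, Fin.lt_def] at hp ⊢
        exact ⟨hp, p2.2⟩
      · rintro ⟨p1, p2⟩ hp
        simp only [Finset.mem_filter, Finset.mem_univ, true_and, Fin.lt_def] at hp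
        simp only [Prod.ext_iff, Fin.ext_iff]
        first
        | (simp; omega)
        | omega
        | simp
      · rintro ⟨p1, p2⟩ hp
        simp only [Finset.mem_filter, Finset.mem_univ, true_and, Fin.lt_def] at hp
        simp only [Prod.ext_iff, Fin.ext_iff]
        first
        | (simp; omega)
        | omega
        | simp
      · rintro ⟨p1, p2⟩ hp
        simp only [Finset.mem_filter, Finset.mem_univ, true_and, Fin.lt_def] at hp
        rw [ha' p1 ⟨min (p1 : ℕ) (g - 1), by omega⟩ (by first | (simp; omega) | omega | simp),
          ha' p2 ⟨min (p2 : ℕ) (g - 1), by omega⟩ (by first | (simp; omega) | omega | simp)]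
    have h2 : ∏ p ∈ ((Finset.univ.filter (fun p : Fin (2 * g) × Fin (2 * g) => p.1 < p.2)).filter
          (fun p => ¬ (p.2 : ℕ) < g)).filter (fun p => ¬ (p.1 : ℕ) < g), (r p.1 - r p.2) ^ 2
        = ∏ p ∈ Finset.univ.filter (fun p : Fin g × Fin g => p.1 < p.2), (b p.1 - b p.2) ^ 2 := by
      refine Finset.prod_nbij'
        (fun p : Fin (2 * g) × Fin (2 * g) =>
          ((⟨(p.1 : ℕ) - g, by omega⟩ : Fin g), (⟨(p.2 : ℕ) - g, by omega⟩ : Fin g)))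
        (fun p : Fin g × Fin g =>
          ((⟨g + (p.1 : ℕ), by omega⟩ : Fin (2 * g)), (⟨g + (p.2 : ℕ), by omega⟩ : Fin (2 * g))))
        ?_ ?_ ?_ ?_ ?_
      · rintro ⟨p1, p2⟩ hp
        simp only [Finset.mem_filter, Finset.mem_univ, true_and, Fin.lt_def] at hp ⊢
        omega
      · rintro ⟨p1, p2⟩ hp
        simp only [Finset.mem_filter, Finset.mem_univ, true_and, Fin.lt_def] at hp ⊢
        omega
      · rintro ⟨p1, p2⟩ hp
        simp only [Finset.mem_filter, Finset.mem_univ, true_and, Fin.lt_def] at hp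
        simp only [Prod.ext_iff, Fin.ext_iff]
        first
        | (simp; omega)
        | omega
        | simp
      · rintro ⟨p1, p2⟩ hp
        simp only [Finset.mem_filter, Finset.mem_univ, true_and, Fin.lt_def] at hp
        simp only [Prod.ext_iff, Fin.ext_iff]
        first
        | (simp; omega)
        | omega
        | simp
      · rintro ⟨p1, p2⟩ hp
        simp only [Finset.mem_filter, Finset.mem_univ, true_and, Fin.lt_def] at hp
        rw [hb' p1 ⟨(p1 : ℕ) - g, by omega⟩ (by first | (simp; omega) | omega | simp),
          hb' p2 ⟨(p2 : ℕ) - g, by omega⟩ (by first | (simp; omega) | omega | simp)]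
    have h3 : ∏ p ∈ ((Finset.univ.filter (fun p : Fin (2 * g) × Fin (2 * g) => p.1 < p.2)).filter
          (fun p => ¬ (p.2 : ℕ) < g)).filter (fun p => (p.1 : ℕ) < g), (r p.1 - r p.2) ^ 2
        = ∏ p : Fin g × Fin g, (a p.1 - b p.2) ^ 2 := by
      refine Finset.prod_nbij'
        (fun p : Fin (2 * g) × Fin (2 * g) =>
          ((⟨min (p.1 : ℕ) (g - 1), by omega⟩ : Fin g), (⟨(p.2 : ℕ) - g, by omega⟩ : Fin g)))
        (fun p : Fin g × Fin g =>
          ((⟨(p.1 : ℕ), by omega⟩ : Fin (2 * g)), (⟨g + (p.2 : ℕ), by omega⟩ : Fin (2 * g))))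
        ?_ ?_ ?_ ?_ ?_
      · rintro ⟨p1, p2⟩ hp
        exact Finset.mem_univ _
      · rintro ⟨p1, p2⟩ hp
        simp only [Finset.mem_filter, Finset.mem_univ, true_and, Fin.lt_def]
        refine ⟨⟨?_, ?_⟩, ?_⟩ <;> first | (simp; omega) | omega | simp
      · rintro ⟨p1, p2⟩ hp
        simp only [Finset.mem_filter, Finset.mem_univ, true_and, Fin.lt_def] at hp
        simp only [Prod.ext_iff, Fin.ext_iff]
        first
        | (simp; omega)
        | omega
        | simp
      · rintro ⟨p1, p2⟩ hp
        simp only [Prod.ext_iff, Fin.ext_iff]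
        first
        | (simp; omega)
        | omega
        | simp
      · rintro ⟨p1, p2⟩ hp
        simp only [Finset.mem_filter, Finset.mem_univ, true_and, Fin.lt_def] at hp
        rw [ha' p1 ⟨min (p1 : ℕ) (g - 1), by omega⟩ (by first | (simp; omega) | omega | simp),
          hb' p2 ⟨(p2 : ℕ) - g, by omega⟩ (by first | (simp; omega) | omega | simp)]
    rw [h1, h2, h3]
    ring
  have hPyth : ∀ k : Fin g, ((Real.cos (θ k) : ℂ) + (Real.sin (θ k) : ℂ) * Complex.I)
      * ((Real.cos (θ k) : ℂ) - (Real.sin (θ k) : ℂ) * Complex.I) = 1 := by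
    intro k
    have h1 : (Real.sin (θ k) : ℂ) ^ 2 + (Real.cos (θ k) : ℂ) ^ 2 = 1 := by
      rw [Complex.ofReal_sin, Complex.ofReal_cos]; exact Complex.sin_sq_add_cos_sq _
    linear_combination h1 - (Real.sin (θ k) : ℂ) ^ 2 * Complex.I_sq
  have hau : ∀ k : Fin g, a k
      = s * ((Real.cos (θ k) : ℂ) + (Real.sin (θ k) : ℂ) * Complex.I) := by
    intro k
    rw [ha]
    simp only
    rw [Complex.exp_mul_I, ← Complex.ofReal_cos, ← Complex.ofReal_sin]
  have hbv : ∀ k : Fin g, b k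
      = s * ((Real.cos (θ k) : ℂ) - (Real.sin (θ k) : ℂ) * Complex.I) := by
    intro k
    rw [hb]
    simp only
    rw [Complex.exp_mul_I, Complex.cos_neg, Complex.sin_neg,
      ← Complex.ofReal_cos, ← Complex.ofReal_sin]
    ring
  have hdiagk : ∀ k : Fin g, (a k - b k) ^ 2 = -(4 * (q : ℂ)) * (Real.sin (θ k) : ℂ) ^ 2 := by
    intro k
    rw [hau k, hbv k]
    linear_combination (4 * (Real.sin (θ k) : ℂ) ^ 2 * Complex.I ^ 2) * hs2
      + (4 * (Real.sin (θ k) : ℂ) ^ 2 * (q : ℂ)) * Complex.I_sq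
  have hpair : ∀ p : Fin g × Fin g,
      (a p.1 - a p.2) ^ 2 * (b p.1 - b p.2) ^ 2 * ((a p.1 - b p.2) ^ 2 * (a p.2 - b p.1) ^ 2)
        = (4 * (q : ℂ) ^ 2 * ((Real.cos (θ p.1) : ℂ) - (Real.cos (θ p.2) : ℂ)) ^ 2) ^ 2 := by
    rintro ⟨k, t⟩
    simp only
    rw [hau k, hau t, hbv k, hbv t]
    have hK := aux_key _ _ _ _ (hPyth k) (hPyth t)
    linear_combination s ^ 8 * hK
      + 16 * ((Real.cos (θ k) : ℂ) - (Real.cos (θ t) : ℂ)) ^ 4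
        * (s ^ 6 + s ^ 4 * (q : ℂ) + s ^ 2 * (q : ℂ) ^ 2 + (q : ℂ) ^ 3) * hs2
  have hdiagsplit : (∏ p : Fin g × Fin g, (a p.1 - b p.2) ^ 2)
      = (∏ k : Fin g, (a k - b k) ^ 2) *
        ∏ p ∈ Finset.univ.filter (fun p : Fin g × Fin g => ¬ p.1 = p.2), (a p.1 - b p.2) ^ 2 := by
    rw [← Finset.prod_filter_mul_prod_filter_not (Finset.univ : Finset (Fin g × Fin g))
      (fun p => p.1 = p.2)]
    congr 1
    refine Finset.prod_nbij' (fun p : Fin g × Fin g => p.1) (fun k => (k, k)) ?_ ?_ ?_ ?_ ?_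
    · intro p hp; exact Finset.mem_univ _
    · intro k hk; simp
    · intro p hp
      simp only [Finset.mem_filter, Finset.mem_univ, true_and] at hp
      exact Prod.ext rfl hp
    · intro k hk; rfl
    · intro p hp
      simp only [Finset.mem_filter, Finset.mem_univ, true_and] at hp
      show (a p.1 - b p.2) ^ 2 = (a p.1 - b p.1) ^ 2
      rw [hp]
  have hcross : (∏ p ∈ Finset.univ.filter (fun p : Fin g × Fin g => ¬ p.1 = p.2),
        (a p.1 - b p.2) ^ 2)
      = ∏ p ∈ Finset.univ.filter (fun p : Fin g × Fin g => p.1 < p.2),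
          ((a p.1 - b p.2) ^ 2 * (a p.2 - b p.1) ^ 2) := by
    have hne : (Finset.univ.filter (fun p : Fin g × Fin g => ¬ p.1 = p.2))
        = Finset.univ.filter (fun p : Fin g × Fin g => p.1 ≠ p.2) := rfl
    rw [hne, aux_ne, ← Finset.prod_mul_distrib]
    exact Finset.prod_congr rfl fun p _ => rfl
  have hcard : (Finset.univ.filter (fun p : Fin g × Fin g => p.1 ≠ p.2)).card = g * g - g := by
    have h : (Finset.univ.filter (fun p : Fin g × Fin g => p.1 ≠ p.2))
        = (Finset.univ : Finset (Fin g)).offDiag := by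
      ext p; simp [Finset.mem_offDiag]
    rw [h, Finset.offDiag_card, Finset.card_univ, Fintype.card_fin]
  have hWsplit : (∏ p ∈ Finset.univ.filter (fun p : Fin g × Fin g => p.1 < p.2),
        (4 * (q : ℂ) ^ 2 * ((Real.cos (θ p.1) : ℂ) - (Real.cos (θ p.2) : ℂ)) ^ 2) ^ 2)
      = (4 * (q : ℂ) ^ 2) ^ (g * g - g) *
        (∏ p ∈ Finset.univ.filter (fun p : Fin g × Fin g => p.1 < p.2),
          ((Real.cos (θ p.1) : ℂ) - (Real.cos (θ p.2) : ℂ)) ^ 2) ^ 2 := by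
    have e1 : ∀ p : Fin g × Fin g,
        (4 * (q : ℂ) ^ 2 * ((Real.cos (θ p.1) : ℂ) - (Real.cos (θ p.2) : ℂ)) ^ 2) ^ 2
        = (fun p : Fin g × Fin g =>
            4 * (q : ℂ) ^ 2 * ((Real.cos (θ p.1) : ℂ) - (Real.cos (θ p.2) : ℂ)) ^ 2) p *
          (fun p : Fin g × Fin g =>
            4 * (q : ℂ) ^ 2 * ((Real.cos (θ p.1) : ℂ) - (Real.cos (θ p.2) : ℂ)) ^ 2) p.swap := by
      intro p
      simp only [Prod.fst_swap, Prod.snd_swap]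
      ring
    rw [Finset.prod_congr rfl (fun p _ => e1 p), Finset.prod_mul_distrib, ← aux_ne,
      Finset.prod_mul_distrib, Finset.prod_const, hcard, aux_ne]
    have e2 : (∏ p ∈ Finset.univ.filter (fun p : Fin g × Fin g => p.1 < p.2),
          (fun p : Fin g × Fin g =>
            ((Real.cos (θ p.1) : ℂ) - (Real.cos (θ p.2) : ℂ)) ^ 2) p.swap)
        = ∏ p ∈ Finset.univ.filter (fun p : Fin g × Fin g => p.1 < p.2),
            ((Real.cos (θ p.1) : ℂ) - (Real.cos (θ p.2) : ℂ)) ^ 2 := by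
      refine Finset.prod_congr rfl fun p _ => ?_
      simp only [Prod.fst_swap, Prod.snd_swap]
      ring
    rw [e2]
    ring
  have hdiagprod : (∏ k : Fin g, (a k - b k) ^ 2)
      = (-(4 * (q : ℂ))) ^ g * ∏ j : Fin g, (Real.sin (θ j) : ℂ) ^ 2 := by
    rw [Finset.prod_congr rfl (fun k _ => hdiagk k), Finset.prod_mul_distrib,
      Finset.prod_const, Finset.card_univ, Fintype.card_fin]
  have hM : (∏ p ∈ Finset.univ.filter (fun p : Fin g × Fin g => p.1 < p.2), (a p.1 - a p.2) ^ 2)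
        * (∏ p ∈ Finset.univ.filter (fun p : Fin g × Fin g => p.1 < p.2), (b p.1 - b p.2) ^ 2)
        * (∏ p ∈ Finset.univ.filter (fun p : Fin g × Fin g => p.1 < p.2),
            ((a p.1 - b p.2) ^ 2 * (a p.2 - b p.1) ^ 2))
      = (4 * (q : ℂ) ^ 2) ^ (g * g - g) *
        (∏ p ∈ Finset.univ.filter (fun p : Fin g × Fin g => p.1 < p.2),
          ((Real.cos (θ p.1) : ℂ) - (Real.cos (θ p.2) : ℂ)) ^ 2) ^ 2 := by
    rw [← Finset.prod_mul_distrib, ← Finset.prod_mul_distrib]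
    exact (Finset.prod_congr rfl fun p _ => hpair p).trans hWsplit
  have hgg : g ≤ g * g := by nlinarith
  have hconst : (-(4 * (q : ℂ))) ^ g * (4 * (q : ℂ) ^ 2) ^ (g * g - g)
      = (-1 : ℂ) ^ g * 2 ^ (2 * g ^ 2) * (q : ℂ) ^ (2 * g ^ 2 - g) := by
    have e1 : (-(4 * (q : ℂ))) ^ g = (-1 : ℂ) ^ g * ((2 : ℂ) ^ (2 * g) * (q : ℂ) ^ g) := by
      rw [show -(4 * (q : ℂ)) = (-1) * ((2 : ℂ) ^ 2 * (q : ℂ)) by norm_num, mul_pow, mul_pow,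
        ← pow_mul]
    have e2 : (4 * (q : ℂ) ^ 2) ^ (g * g - g)
        = (2 : ℂ) ^ (2 * (g * g - g)) * (q : ℂ) ^ (2 * (g * g - g)) := by
      rw [show (4 : ℂ) * (q : ℂ) ^ 2 = (2 : ℂ) ^ 2 * ((q : ℂ) ^ 2) by norm_num, mul_pow,
        ← pow_mul, ← pow_mul]
    have hp2 : g ^ 2 = g * g := pow_two g
    have ee1 : 2 * g + 2 * (g * g - g) = 2 * g ^ 2 := by rw [hp2]; omega
    have ee2 : g + 2 * (g * g - g) = 2 * g ^ 2 - g := by rw [hp2]; omega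
    calc (-(4 * (q : ℂ))) ^ g * (4 * (q : ℂ) ^ 2) ^ (g * g - g)
        = (-1 : ℂ) ^ g * ((2 : ℂ) ^ (2 * g) * (2 : ℂ) ^ (2 * (g * g - g)))
          * ((q : ℂ) ^ g * (q : ℂ) ^ (2 * (g * g - g))) := by rw [e1, e2]; ring
      _ = (-1 : ℂ) ^ g * (2 : ℂ) ^ (2 * g + 2 * (g * g - g))
          * (q : ℂ) ^ (g + 2 * (g * g - g)) := by rw [pow_add, pow_add]
      _ = _ := by rw [ee1, ee2]
  rw [hstepA, hdiagsplit, hcross, hdiagprod]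
  linear_combination ((-(4 * (q : ℂ))) ^ g * ∏ j : Fin g, (Real.sin (θ j) : ℂ) ^ 2) * hM
    + ((∏ j : Fin g, (Real.sin (θ j) : ℂ) ^ 2) *
        (∏ p ∈ Finset.univ.filter (fun p : Fin g × Fin g => p.1 < p.2),
          ((Real.cos (θ p.1) : ℂ) - (Real.cos (θ p.2) : ℂ)) ^ 2) ^ 2) * hconst
end

section
/- Let g be an odd prime and F a finite field with an element m ∈ F^×. Suppose f(T) ∈ F[T] is monic of degree 2g, equal to a product of distinct monic irreducible polynomials all of the same degree d with the same multiplicity e, where all roots pair up so products of pairs equal m, and suppose f has a transitive Galois structure (all irreducible factors have equal degree and multiplicity, and 2g = d·e·r with r the number of factors). Then the possible factorization shapes (d, e, r) are exactly: (1,1,2g), (2,1,g), (g,1,2), (1,g,2), (2g,1,1), (2,g,1), (1,2g,1). -/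
/-- over a finite field, a monic polynomial `f` of degree `2g`
(`g` an odd prime) which is a product of `r` distinct monic irreducible
polynomials all of degree `d`, each with multiplicity `e`, whose roots carry a
transitive cyclic (Galois/Frobenius) structure and pair up with products equal
to the multiplier `m`, has factorization shape `(d, e, r)` among exactly the
seven listed triples. -/
theorem stmt16 (g : ℕ) (hg : g.Prime) (hgodd : Odd g) [NeZero (2 * g)]
    {F : Type*} [Field F] [Fintype F] (m : F) (hm : m ≠ 0)
    (f : Polynomial F) (hmonic : f.Monic) (hdeg : f.natDegree = 2 * g)
    (d e r : ℕ) (S : Finset (Polynomial F)) (hr : S.card = r)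
    (hS : ∀ p ∈ S, p.Monic ∧ Irreducible p ∧ p.natDegree = d)
    (hfac : f = ∏ p ∈ S, p ^ e)
    (hder : d * e * r = 2 * g)
    (E : Type*) [Field E] [Algebra F E]
    (root : ZMod (2 * g) → E) (φ : E →+* E)
    (hsplit : f.map (algebraMap F E)
      = ∏ i : ZMod (2 * g), (Polynomial.X - Polynomial.C (root i)))
    (hfrob : ∀ i, root (i + 1) = φ (root i))
    (hpair : ∀ i, root i * root (i + (g : ZMod (2 * g))) = algebraMap F E m) :
    (d, e, r) ∈ ({(1, 1, 2 * g), (2, 1, g), (g, 1, 2), (1, g, 2), (2 * g, 1, 1),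
      (2, g, 1), (1, 2 * g, 1)} : Set (ℕ × ℕ × ℕ)) := by
  classical
  obtain ⟨kodd, hkodd⟩ := hgodd
  have hg2 : 2 ≤ g := hg.two_le
  have hg3 : 3 ≤ g := by omega
  -- translation lemma for the Frobenius structure
  have htrans : ∀ x y : ZMod (2 * g), root x = root y →
      ∀ t : ZMod (2 * g), root (x + t) = root (y + t) := by
    intro x y hxy t
    have key : ∀ n : ℕ, root (x + (n : ZMod (2 * g))) = root (y + (n : ZMod (2 * g))) := by
      intro n
      induction n with
      | zero => simpa using hxy
      | succ k ih =>
        have hc : ((k + 1 : ℕ) : ZMod (2 * g)) = (k : ZMod (2 * g)) + 1 := by push_cast; ring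
        rw [hc, ← add_assoc, ← add_assoc, hfrob, hfrob, ih]
    have h1 := key t.val
    rwa [ZMod.natCast_zmod_val t] at h1
  -- the key exclusion: e ≠ 2
  have he2 : e ≠ 2 := by
    intro he; subst he
    have hdr : d * r = g := by
      have h3 : 2 * (d * r) = 2 * g := by rw [← hder]; ring
      omega
    set s : Multiset E := Multiset.map root Finset.univ.val with hs
    have hroots_s : (f.map (algebraMap F E)).roots = s := by
      rw [hsplit]
      have h1 : (∏ i : ZMod (2 * g), (Polynomial.X - Polynomial.C (root i)))
          = (s.map fun a => Polynomial.X - Polynomial.C a).prod := by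
        rw [hs, Multiset.map_map]
        rfl
      rw [h1, Polynomial.roots_multiset_prod_X_sub_C]
    set q : Polynomial E := (∏ p ∈ S, p).map (algebraMap F E) with hq
    have hfq : f.map (algebraMap F E) = q ^ 2 := by
      rw [hq, ← Polynomial.map_pow, ← Finset.prod_pow, ← hfac]
    have hs_eq : s = 2 • q.roots := by
      rw [← hroots_s, hfq, Polynomial.roots_pow]
    have hcount : Multiset.count (root 0) s = 2 * Multiset.count (root 0) q.roots := by
      rw [hs_eq, Multiset.count_nsmul]
    -- the stabilizer subgroup of root 0
    let P : AddSubgroup (ZMod (2 * g)) :=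
      { carrier := {c | root c = root 0}
        zero_mem' := rfl
        add_mem' := by
          intro a b ha hb
          have h1 := htrans a 0 ha b
          simp only [zero_add] at h1
          exact h1.trans hb
        neg_mem' := by
          intro a ha
          have h1 := htrans a 0 ha (-a)
          simp only [add_neg_cancel, zero_add] at h1
          exact h1.symm }
    have hPcard : Fintype.card P = Multiset.count (root 0) s := by
      rw [hs, Multiset.count_map]
      have h1 : Multiset.card (Multiset.filter (fun a => root 0 = root a) Finset.univ.val)
          = (Finset.filter (fun a => root 0 = root a) Finset.univ).card := rfl
      rw [h1]
      refine Fintype.card_of_subtype _ fun x => ?_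
      simp only [Finset.mem_filter, Finset.mem_univ, true_and]
      constructor
      · intro hx
        exact hx.symm
      · intro hx
        exact (show root x = root 0 from hx).symm
    haveI : Fact (Nat.Prime 2) := ⟨Nat.prime_two⟩
    have h2dvd : 2 ∣ Fintype.card P := by
      rw [hPcard, hcount]; exact Dvd.intro _ rfl
    obtain ⟨x, hx⟩ := exists_prime_addOrderOf_dvd_card 2 h2dvd
    have hx2 : (2 : ℕ) • x = 0 := by
      have h1 := addOrderOf_nsmul_eq_zero x
      rw [hx] at h1
      exact h1
    have hxne : x ≠ 0 := by
      intro h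
      rw [h, addOrderOf_zero] at hx
      omega
    set a : ZMod (2 * g) := (x : ZMod (2 * g)) with haa
    have ha2 : a + a = 0 := by
      have h1 := congrArg (fun y : P => (y : ZMod (2 * g))) hx2
      simpa [two_nsmul] using h1
    have hane : a ≠ 0 := fun h => hxne (ZeroMemClass.coe_eq_zero.mp h)
    have hag : a = ((g : ℕ) : ZMod (2 * g)) := by
      have hv : ((2 * a.val : ℕ) : ZMod (2 * g)) = 0 := by
        push_cast
        rw [ZMod.natCast_zmod_val a]
        linear_combination ha2
      have hdvd2 : 2 * g ∣ 2 * a.val := (ZMod.natCast_eq_zero_iff _ _).mp hv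
      have hvlt : a.val < 2 * g := ZMod.val_lt a
      have hvne : a.val ≠ 0 := fun h => hane (by rw [← ZMod.natCast_zmod_val a, h]; simp)
      obtain ⟨k, hk⟩ := hdvd2
      have hvg : a.val = g := by
        rcases k with _ | (_ | k)
        · simp at hk
          exact absurd hk hane
        · simp at hk; omega
        · have h1 : 2 * g * 2 ≤ 2 * a.val := by
            rw [hk]; exact Nat.mul_le_mul_left _ (by omega)
          omega
      rw [← ZMod.natCast_zmod_val a, hvg]
    have hmemP : root a = root 0 := x.2
    have hg0 : root ((g : ℕ) : ZMod (2 * g)) = root 0 := by rw [← hag]; exact hmemP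
    have hper : ∀ i, root (i + ((g : ℕ) : ZMod (2 * g))) = root i := by
      intro i
      have h1 := htrans _ _ hg0 i
      simpa [add_comm] using h1
    have hsq : ∀ i, root i * root i = algebraMap F E m := by
      intro i
      have h1 := hpair i
      rwa [hper i] at h1
    -- q is separable, hence has g ≥ 3 distinct roots
    have hqsep : q.Separable := by
      rw [hq, Polynomial.map_prod]
      apply Polynomial.separable_prod'
      · intro p1 h1 p2 h2 hne
        have hcop : IsCoprime p1 p2 := by
          rw [Irreducible.coprime_iff_not_dvd (hS p1 h1).2.1]
          intro hdvd
          exact hne (Polynomial.eq_of_monic_of_associated (hS p1 h1).1 (hS p2 h2).1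
            ((hS p1 h1).2.1.associated_of_dvd (hS p2 h2).2.1 hdvd))
        have := hcop.map (Polynomial.mapRingHom (algebraMap F E))
        simpa using this
      · intro p1 h1
        exact (PerfectField.separable_of_irreducible (hS p1 h1).2.1).map
    have hnodup : q.roots.Nodup := Polynomial.nodup_roots hqsep
    have hcards : Multiset.card s = 2 * g := by
      rw [hs, Multiset.card_map]
      simp [ZMod.card]
    have hcardq : Multiset.card q.roots = g := by
      have h1 := congrArg Multiset.card hs_eq
      rw [hcards, Multiset.card_nsmul] at h1
      omega
    set t := q.roots.toFinset with ht
    have htc : t.card = g := by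
      rw [ht, Multiset.toFinset_card_of_nodup hnodup, hcardq]
    obtain ⟨A, hA⟩ := Finset.card_pos.mp (show 0 < t.card by omega)
    obtain ⟨B, hB⟩ := Finset.card_pos.mp
      (show 0 < (t.erase A).card by rw [Finset.card_erase_of_mem hA]; omega)
    obtain ⟨C, hC⟩ := Finset.card_pos.mp
      (show 0 < ((t.erase A).erase B).card by
        rw [Finset.card_erase_of_mem hB, Finset.card_erase_of_mem hA]; omega)
    have hBA : B ≠ A := (Finset.mem_erase.mp hB).1
    have hCB : C ≠ B := (Finset.mem_erase.mp hC).1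
    have hCA : C ≠ A := (Finset.mem_erase.mp ((Finset.mem_erase.mp hC).2)).1
    have hmemt : ∀ z ∈ t, z * z = algebraMap F E m := by
      intro z hz
      have hz1 : z ∈ q.roots := Multiset.mem_toFinset.mp hz
      have hz2 : z ∈ s := by
        rw [hs_eq]
        exact Multiset.mem_nsmul.mpr ⟨two_ne_zero, hz1⟩
      rw [hs] at hz2
      obtain ⟨i, _, hi⟩ := Multiset.mem_map.mp hz2
      rw [← hi]; exact hsq i
    have hA2 := hmemt A hA
    have hB2 := hmemt B (Finset.mem_of_mem_erase hB)
    have hC2 := hmemt C (Finset.mem_of_mem_erase (Finset.mem_of_mem_erase hC))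
    have hAB : A = -B := by
      rcases mul_self_eq_mul_self_iff.mp (hA2.trans hB2.symm) with h | h
      · exact absurd h.symm hBA
      · exact h
    have hAC : A = -C := by
      rcases mul_self_eq_mul_self_iff.mp (hA2.trans hC2.symm) with h | h
      · exact absurd h.symm hCA
      · exact h
    exact hCB (neg_injective (hAC.symm.trans hAB))
  -- arithmetic enumeration
  have hmul3 : ∀ x y z : ℕ, x * y * z = 2 →
      (x = 2 ∧ y = 1 ∧ z = 1) ∨ (x = 1 ∧ y = 2 ∧ z = 1) ∨ (x = 1 ∧ y = 1 ∧ z = 2) := by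
    intro x y z h
    have hx : x ≤ 2 := Nat.le_of_dvd (by norm_num) ⟨y * z, by rw [← h]; ring⟩
    have hy : y ≤ 2 := Nat.le_of_dvd (by norm_num) ⟨x * z, by rw [← h]; ring⟩
    interval_cases x <;> interval_cases y <;> omega
  have hgd : g ∣ d ∨ g ∣ e ∨ g ∣ r := by
    have h1 : g ∣ d * e * r := ⟨2, by rw [hder]; ring⟩
    rcases (Nat.Prime.dvd_mul hg).mp h1 with h | h
    · rcases (Nat.Prime.dvd_mul hg).mp h with h' | h'
      · exact Or.inl h'
      · exact Or.inr (Or.inl h')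
    · exact Or.inr (Or.inr h)
  simp only [Set.mem_insert_iff, Set.mem_singleton_iff, Prod.mk.injEq]
  rcases hgd with ⟨d', rfl⟩ | ⟨e', rfl⟩ | ⟨r', rfl⟩
  · have h2 : d' * e * r = 2 := by
      refine Nat.eq_of_mul_eq_mul_left (show 0 < g by omega) ?_
      calc g * (d' * e * r) = g * d' * e * r := by ring
        _ = 2 * g := hder
        _ = g * 2 := by ring
    rcases hmul3 _ _ _ h2 with ⟨rfl, rfl, rfl⟩ | ⟨rfl, rfl, rfl⟩ | ⟨rfl, rfl, rfl⟩
    · omega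
    · exact absurd rfl he2
    · omega
  · have h2 : d * e' * r = 2 := by
      refine Nat.eq_of_mul_eq_mul_left (show 0 < g by omega) ?_
      calc g * (d * e' * r) = d * (g * e') * r := by ring
        _ = 2 * g := hder
        _ = g * 2 := by ring
    rcases hmul3 _ _ _ h2 with ⟨rfl, rfl, rfl⟩ | ⟨rfl, rfl, rfl⟩ | ⟨rfl, rfl, rfl⟩
    · omega
    · omega
    · omega
  · have h2 : d * e * r' = 2 := by
      refine Nat.eq_of_mul_eq_mul_left (show 0 < g by omega) ?_
      calc g * (d * e * r') = d * e * (g * r') := by ring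
        _ = 2 * g := hder
        _ = g * 2 := by ring
    rcases hmul3 _ _ _ h2 with ⟨rfl, rfl, rfl⟩ | ⟨rfl, rfl, rfl⟩ | ⟨rfl, rfl, rfl⟩
    · omega
    · exact absurd rfl he2
    · omega
end
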